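/- Explicit construction: in a projective plane of order q ≥ 3, let P, Q, R be three points in general position; let P_S consist of all points of the lines PQ and PR except P, Q, R, and let L_S consist of all lines through P or through R except PQ, PR, RQ. Then P_S ∪ L_S is a resolving set of size 4q − 4 for the incidence graph. -/

import Mathlib

open Configuration

variable (P L : Type*) [Membership P L]

/-- The incidence graph of an incidence structure: vertices are points and lines,
with a point adjacent to a line iff it lies on it. -/
def incGraph : SimpleGraph (P ⊕ L) where
  Adj x y := match x, y with
    | .inl p, .inr l => p ∈ l
    | .inr l, .inl p => p ∈ l
    | _, _ => False
  symm := ⟨by rintro (p | l) (p' | l') h <;> simp_all⟩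
  loopless := ⟨by rintro (p | l) h <;> simp_all⟩

/-- A set of vertices is resolving if the ordered distance lists to its elements
distinguish all vertices. -/
def IsResolvingSet (S : Set (P ⊕ L)) : Prop :=
  ∀ x y : P ⊕ L, (∀ s ∈ S, (incGraph P L).dist x s = (incGraph P L).dist y s) → x = y

/-- A vertex `x` is resolved by `S` if no other vertex has the same distance list. -/
def ResolvedBy (S : Set (P ⊕ L)) (x : P ⊕ L) : Prop :=
  ∀ y : P ⊕ L, (∀ s ∈ S, (incGraph P L).dist x s = (incGraph P L).dist y s) → y = x

/-- The metric dimension: the least size of a resolving set. -/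
noncomputable def metricDim : ℕ :=
  sInf {n | ∃ S : Finset (P ⊕ L), S.card = n ∧ IsResolvingSet P L ↑S}

section Aux

open Configuration.HasLines Configuration.HasPoints

variable {P L}

lemma aux_adj_pl {p : P} {l : L} (h : p ∈ l) : (incGraph P L).Adj (.inl p) (.inr l) := h
lemma aux_adj_lp {p : P} {l : L} (h : p ∈ l) : (incGraph P L).Adj (.inr l) (.inl p) := h

lemma aux_walk_parity : ∀ {x y : P ⊕ L} (w : (incGraph P L).Walk x y),
    Even w.length ↔ (x.isLeft = y.isLeft) := by
  intro x y w
  induction w with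
  | nil => simp
  | @cons a b c h w ih =>
    rw [SimpleGraph.Walk.length_cons, Nat.even_add_one, ih]
    rcases a with p | l <;> rcases b with p' | l' <;> rcases c with p'' | l'' <;>
      simp_all <;> exact h

variable [ProjectivePlane P L] [Fintype P] [Fintype L]

lemma aux_exists_mem_line (l : L) : ∃ p : P, p ∈ l := by
  have h := ProjectivePlane.pointCount_eq P l
  rw [pointCount] at h
  have : Nat.card {p : P // p ∈ l} ≠ 0 := by omega
  rw [Nat.card_ne_zero] at this
  obtain ⟨⟨p, hp⟩⟩ := this.1
  exact ⟨p, hp⟩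

lemma aux_dist_inl_inl {p q : P} (h : p ≠ q) :
    (incGraph P L).dist (.inl p) (.inl q) = 2 := by
  let w : (incGraph P L).Walk (.inl p) (.inl q) :=
    .cons (aux_adj_pl (mkLine_ax (L := L) h).1)
      (.cons (aux_adj_lp (mkLine_ax h).2) .nil)
  have h2 : (incGraph P L).dist _ _ ≤ 2 := SimpleGraph.dist_le w
  have h0 : 0 < (incGraph P L).dist (.inl p) (.inl q) :=
    SimpleGraph.Reachable.pos_dist_of_ne ⟨w⟩ (by simp [h])
  have h1 : (incGraph P L).dist (.inl p) (.inl q) ≠ 1 := by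
    exact fun he => (SimpleGraph.dist_eq_one_iff_adj.mp he : _)
  omega

lemma aux_dist_inr_inr {l m : L} (h : l ≠ m) :
    (incGraph P L).dist (.inr l) (.inr m) = 2 := by
  let w : (incGraph P L).Walk (.inr l) (.inr m) :=
    .cons (aux_adj_lp (mkPoint_ax (P := P) h).1)
      (.cons (aux_adj_pl (mkPoint_ax h).2) .nil)
  have h2 : (incGraph P L).dist _ _ ≤ 2 := SimpleGraph.dist_le w
  have h0 : 0 < (incGraph P L).dist (.inr l) (.inr m) :=
    SimpleGraph.Reachable.pos_dist_of_ne ⟨w⟩ (by simp [h])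
  have h1 : (incGraph P L).dist (.inr l) (.inr m) ≠ 1 := by
    exact fun he => (SimpleGraph.dist_eq_one_iff_adj.mp he : _)
  omega

lemma aux_dist_inl_inr_mem {p : P} {l : L} (h : p ∈ l) :
    (incGraph P L).dist (.inl p) (.inr l) = 1 :=
  SimpleGraph.dist_eq_one_iff_adj.mpr h

lemma aux_dist_inl_inr_not_mem {p : P} {l : L} (h : p ∉ l) :
    (incGraph P L).dist (.inl p) (.inr l) = 3 := by
  obtain ⟨s, hs⟩ := aux_exists_mem_line (P := P) l
  have hps : p ≠ s := fun e => h (e ▸ hs)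
  let w : (incGraph P L).Walk (.inl p) (.inr l) :=
    .cons (aux_adj_pl (mkLine_ax (L := L) hps).1)
      (.cons (aux_adj_lp (mkLine_ax hps).2)
        (.cons (aux_adj_pl hs) .nil))
  have h3 : (incGraph P L).dist _ _ ≤ 3 := SimpleGraph.dist_le w
  have h0 : 0 < (incGraph P L).dist (.inl p) (.inr l) :=
    SimpleGraph.Reachable.pos_dist_of_ne ⟨w⟩ (by simp)
  have h1 : (incGraph P L).dist (.inl p) (.inr l) ≠ 1 := by
    exact fun he => h (SimpleGraph.dist_eq_one_iff_adj.mp he)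
  have hodd : ¬ Even ((incGraph P L).dist (.inl p) (.inr l)) := by
    obtain ⟨w', hw'⟩ := SimpleGraph.Reachable.exists_walk_length_eq_dist ⟨w⟩
    rw [← hw', aux_walk_parity w']
    simp
  rw [Nat.not_even_iff_odd] at hodd
  obtain ⟨k, hk⟩ := hodd
  omega

lemma aux_dist_inr_inl_mem {p : P} {l : L} (h : p ∈ l) :
    (incGraph P L).dist (.inr l) (.inl p) = 1 := by
  rw [SimpleGraph.dist_comm]; exact aux_dist_inl_inr_mem h

lemma aux_dist_inr_inl_not_mem {p : P} {l : L} (h : p ∉ l) :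
    (incGraph P L).dist (.inr l) (.inl p) = 3 := by
  rw [SimpleGraph.dist_comm]; exact aux_dist_inl_inr_not_mem h

lemma aux_line_eq {a b : P} {l l' : L} (hab : a ≠ b) (h1 : a ∈ l) (h2 : b ∈ l)
    (h3 : a ∈ l') (h4 : b ∈ l') : l = l' :=
  (Nondegenerate.eq_or_eq h1 h2 h3 h4).resolve_left hab

lemma aux_pt_eq {a b : P} {l l' : L} (hll : l ≠ l') (h1 : a ∈ l) (h3 : a ∈ l')
    (h2 : b ∈ l) (h4 : b ∈ l') : a = b :=
  (Nondegenerate.eq_or_eq h1 h2 h3 h4).resolve_right hll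

lemma aux_card_line_points (l : L) :
    ({x : P | x ∈ l}).ncard = ProjectivePlane.order P L + 1 := by
  have h := ProjectivePlane.pointCount_eq P l
  rw [pointCount] at h
  rw [← Nat.card_coe_set_eq]
  exact h

lemma aux_card_point_lines (p : P) :
    ({l : L | p ∈ l}).ncard = ProjectivePlane.order P L + 1 := by
  have h := ProjectivePlane.lineCount_eq L p
  rw [lineCount] at h
  rw [← Nat.card_coe_set_eq]
  exact h

lemma aux_exists_two (hq : 3 ≤ ProjectivePlane.order P L) (e : L) (a b : P)
    (hab : a ≠ b) (ha : a ∈ e) (hb : b ∈ e) :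
    ∃ u v : P, u ∈ e ∧ v ∈ e ∧ u ≠ v ∧ u ≠ a ∧ u ≠ b ∧ v ≠ a ∧ v ≠ b := by
  have hsub : ({a, b} : Set P) ⊆ {x : P | x ∈ e} := by
    rintro z (rfl | rfl) <;> assumption
  have hc : ({x : P | x ∈ e} \ {a, b}).ncard =
      ProjectivePlane.order P L + 1 - 2 := by
    rw [Set.ncard_diff hsub, aux_card_line_points, Set.ncard_pair hab]
  have h1 : 1 < ({x : P | x ∈ e} \ {a, b}).ncard := by omega
  obtain ⟨u, v, hu, hv, huv⟩ := (Set.one_lt_ncard_iff (Set.toFinite _)).mp h1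
  simp only [Set.mem_diff, Set.mem_setOf_eq, Set.mem_insert_iff,
    Set.mem_singleton_iff, not_or] at hu hv
  exact ⟨u, v, hu.1, hv.1, huv, hu.2.1, hu.2.2, hv.2.1, hv.2.2⟩

lemma aux_exists_line_avoiding (hq : 3 ≤ ProjectivePlane.order P L)
    (X w : P) (hXw : X ≠ w) (e1 e2 : L) (h1 : X ∈ e1) (h2 : X ∈ e2) :
    ∃ l0 : L, X ∈ l0 ∧ l0 ≠ e1 ∧ l0 ≠ e2 ∧ w ∉ l0 := by
  have hsub : ({e1, e2, mkLine hXw} : Set L) ⊆ {m : L | X ∈ m} := by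
    rintro m (rfl | rfl | rfl)
    · exact h1
    · exact h2
    · exact (mkLine_ax hXw).1
  have ht : ({e1, e2, mkLine hXw} : Set L).ncard ≤ 3 := by
    calc ({e1, e2, mkLine hXw} : Set L).ncard
        ≤ ({e2, mkLine hXw} : Set L).ncard + 1 := Set.ncard_insert_le _ _
      _ ≤ (({mkLine hXw} : Set L).ncard + 1) + 1 := by
          have := Set.ncard_insert_le e2 ({mkLine hXw} : Set L); omega
      _ ≤ 3 := by rw [Set.ncard_singleton]
  have hc : ({m : L | X ∈ m} \ {e1, e2, mkLine hXw}).ncard =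
      ProjectivePlane.order P L + 1 - ({e1, e2, mkLine hXw} : Set L).ncard := by
    rw [Set.ncard_diff hsub, aux_card_point_lines]
  have hne : ({m : L | X ∈ m} \ {e1, e2, mkLine hXw}).ncard ≠ 0 := by omega
  obtain ⟨l0, hl0⟩ := Set.nonempty_of_ncard_ne_zero hne
  simp only [Set.mem_diff, Set.mem_setOf_eq, Set.mem_insert_iff,
    Set.mem_singleton_iff, not_or] at hl0
  refine ⟨l0, hl0.1, hl0.2.1, hl0.2.2.1, fun hw => hl0.2.2.2 ?_⟩
  exact aux_line_eq hXw hl0.1 hw (mkLine_ax hXw).1 (mkLine_ax hXw).2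

end Aux

open Configuration.HasLines in
/-- the explicit construction of a resolving set of size 4q - 4 from three
points in general position. -/
theorem construction_resolving_set
    {P L : Type*} [Membership P L] [ProjectivePlane P L] [Fintype P] [Fintype L]
    (hq : 3 ≤ ProjectivePlane.order P L)
    (Pp Qp Rp : P) (hPQ : Pp ≠ Qp) (hPR : Pp ≠ Rp) (hRQ : Rp ≠ Qp)
    (hgen : Rp ∉ (mkLine hPQ : L)) :
    let ePQ : L := mkLine hPQ
    let ePR : L := mkLine hPR
    let eRQ : L := mkLine hRQ
    let S : Set (P ⊕ L) :=
      (Sum.inl '' {x : P | (x ∈ ePQ ∨ x ∈ ePR) ∧ x ≠ Pp ∧ x ≠ Qp ∧ x ≠ Rp}) ∪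
      (Sum.inr '' {l : L | (Pp ∈ l ∨ Rp ∈ l) ∧ l ≠ ePQ ∧ l ≠ ePR ∧ l ≠ eRQ})
    IsResolvingSet P L S ∧ S.ncard = 4 * ProjectivePlane.order P L - 4 := by
  intro ePQ ePR eRQ S
  have hSeq : S = (Sum.inl '' {x : P | (x ∈ ePQ ∨ x ∈ ePR) ∧ x ≠ Pp ∧ x ≠ Qp ∧ x ≠ Rp}) ∪
      (Sum.inr '' {l : L | (Pp ∈ l ∨ Rp ∈ l) ∧ l ≠ ePQ ∧ l ≠ ePR ∧ l ≠ eRQ}) := rfl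
  have hgen' : Rp ∉ ePQ := hgen
  have hPePQ : Pp ∈ ePQ := (mkLine_ax hPQ).1
  have hQePQ : Qp ∈ ePQ := (mkLine_ax hPQ).2
  have hPePR : Pp ∈ ePR := (mkLine_ax hPR).1
  have hRePR : Rp ∈ ePR := (mkLine_ax hPR).2
  have hReRQ : Rp ∈ eRQ := (mkLine_ax hRQ).1
  have hQeRQ : Qp ∈ eRQ := (mkLine_ax hRQ).2
  have hQPR : Qp ∉ ePR := by
    intro h
    have he : ePR = ePQ := aux_line_eq hPQ hPePR h hPePQ hQePQ
    exact hgen' (he ▸ hRePR)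
  have hPRQ : Pp ∉ eRQ := by
    intro h
    have he : eRQ = ePQ := aux_line_eq hPQ h hQeRQ hPePQ hQePQ
    exact hgen' (he ▸ hReRQ)
  have hPQPR : ePQ ≠ ePR := fun h => hgen' (h ▸ hRePR)
  have hPReRQ : ePR ≠ eRQ := fun h => hQPR (h ▸ hQeRQ)
  have hSA : ∀ z : P, (z ∈ ePQ ∨ z ∈ ePR) → z ≠ Pp → z ≠ Qp → z ≠ Rp →
      Sum.inl z ∈ S := by
    intro z h1 h2 h3 h4
    rw [hSeq]
    exact Or.inl ⟨z, ⟨h1, h2, h3, h4⟩, rfl⟩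
  have hSB : ∀ m : L, (Pp ∈ m ∨ Rp ∈ m) → m ≠ ePQ → m ≠ ePR → m ≠ eRQ →
      Sum.inr m ∈ S := by
    intro m h1 h2 h3 h4
    rw [hSeq]
    exact Or.inr ⟨m, ⟨h1, h2, h3, h4⟩, rfl⟩
  obtain ⟨u0, v0, hu0, hv0, huv0, hu0P, hu0Q, hv0P, hv0Q⟩ :=
    aux_exists_two hq ePQ Pp Qp hPQ hPePQ hQePQ
  have hu0R : u0 ≠ Rp := fun h => hgen' (h ▸ hu0)
  have hu0S : Sum.inl u0 ∈ S := hSA u0 (Or.inl hu0) hu0P hu0Q hu0R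
  constructor
  · -- resolving set
    intro x y hd
    rcases x with p | l <;> rcases y with p' | l'
    · -- point / point
      by_cases hpp : p = p'
      · rw [hpp]
      exfalso
      have hlines : ∀ l0 : L, (Pp ∈ l0 ∨ Rp ∈ l0) → l0 ≠ ePQ → l0 ≠ ePR → l0 ≠ eRQ →
          (p ∈ l0 ↔ p' ∈ l0) := by
        intro l0 h1 h2 h3 h4
        have hdd := hd (.inr l0) (hSB l0 h1 h2 h3 h4)
        by_cases ha : p ∈ l0 <;> by_cases hb : p' ∈ l0
        · exact iff_of_true ha hb
        · rw [aux_dist_inl_inr_mem ha, aux_dist_inl_inr_not_mem hb] at hdd; omega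
        · rw [aux_dist_inl_inr_not_mem ha, aux_dist_inl_inr_mem hb] at hdd; omega
        · exact iff_of_false ha hb
      have hA : ∀ z : P, (z ∈ ePQ ∨ z ∈ ePR) → z ≠ Pp → z ≠ Qp → z ≠ Rp →
          p ≠ z ∧ p' ≠ z := by
        intro z h1 h2 h3 h4
        have hdd := hd (.inl z) (hSA z h1 h2 h3 h4)
        constructor <;> rintro rfl
        · rw [SimpleGraph.dist_self, aux_dist_inl_inl (fun h => hpp h.symm)] at hdd
          omega
        · rw [SimpleGraph.dist_self, aux_dist_inl_inl hpp] at hdd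
          omega
      have step1 : ∀ z w : P, z ≠ w →
          (∀ l0 : L, (Pp ∈ l0 ∨ Rp ∈ l0) → l0 ≠ ePQ → l0 ≠ ePR → l0 ≠ eRQ →
            (z ∈ l0 ↔ w ∈ l0)) → z ≠ Pp ∧ z ≠ Rp := by
        intro z w hzw hiff
        constructor <;> intro he
        · obtain ⟨l0, hX, h1, h2, hw⟩ :=
            aux_exists_line_avoiding hq Pp w (he ▸ hzw) ePQ ePR hPePQ hPePR
          have hzl0 : z ∈ l0 := by rw [he]; exact hX
          have h3 : l0 ≠ eRQ := fun he' => hPRQ (he' ▸ hX)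
          exact hw ((hiff l0 (Or.inl hX) h1 h2 h3).mp hzl0)
        · obtain ⟨l0, hX, h1, h2, hw⟩ :=
            aux_exists_line_avoiding hq Rp w (he ▸ hzw) ePR eRQ hRePR hReRQ
          have hzl0 : z ∈ l0 := by rw [he]; exact hX
          have h3 : l0 ≠ ePQ := fun he' => hgen' (he' ▸ hX)
          exact hw ((hiff l0 (Or.inr hX) h3 h1 h2).mp hzl0)
      obtain ⟨hpP, hpR⟩ := step1 p p' hpp hlines
      obtain ⟨hp'P, hp'R⟩ := step1 p' p (fun h => hpp h.symm)
        (fun l0 a b c d => (hlines l0 a b c d).symm)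
      have hnot : ∀ z : P, (z = p ∨ z = p') → z ≠ Qp → z ∉ ePQ ∧ z ∉ ePR := by
        intro z hz hzQ
        have hzP : z ≠ Pp := by rcases hz with rfl | rfl <;> assumption
        have hzR : z ≠ Rp := by rcases hz with rfl | rfl <;> assumption
        constructor <;> intro hm
        · rcases hz with rfl | rfl
          · exact (hA z (Or.inl hm) hzP hzQ hzR).1 rfl
          · exact (hA z (Or.inl hm) hzP hzQ hzR).2 rfl
        · rcases hz with rfl | rfl
          · exact (hA z (Or.inr hm) hzP hzQ hzR).1 rfl
          · exact (hA z (Or.inr hm) hzP hzQ hzR).2 rfl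
      have stepQ : ∀ z w : P, z ≠ w →
          (∀ l0 : L, (Pp ∈ l0 ∨ Rp ∈ l0) → l0 ≠ ePQ → l0 ≠ ePR → l0 ≠ eRQ →
            (z ∈ l0 ↔ w ∈ l0)) → w ∉ ePQ → w ∉ ePR → Pp ≠ w → z ≠ Qp := by
        intro z w hzw hiff hw1 hw2 hPw heQ
        have hm1 : Pp ∈ (mkLine hPw : L) := (mkLine_ax hPw).1
        have hm2 : w ∈ (mkLine hPw : L) := (mkLine_ax hPw).2
        have h2 : (mkLine hPw : L) ≠ ePQ := fun he => hw1 (he ▸ hm2)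
        have h3 : (mkLine hPw : L) ≠ ePR := fun he => hw2 (he ▸ hm2)
        have h4 : (mkLine hPw : L) ≠ eRQ := fun he => hPRQ (he ▸ hm1)
        have hzm : z ∈ (mkLine hPw : L) := (hiff _ (Or.inl hm1) h2 h3 h4).mpr hm2
        have hQm : Qp ∈ (mkLine hPw : L) := by rw [← heQ]; exact hzm
        have he : (mkLine hPw : L) = ePQ := aux_line_eq hPQ hm1 hQm hPePQ hQePQ
        exact hw1 (he ▸ hm2)
      by_cases hpQ : p = Qp
      · obtain ⟨hw1, hw2⟩ := hnot p' (Or.inr rfl) (fun h => hpp (hpQ.trans h.symm))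
        exact stepQ p p' hpp hlines hw1 hw2 (fun h => hp'P h.symm) hpQ
      by_cases hp'Q : p' = Qp
      · obtain ⟨hw1, hw2⟩ := hnot p (Or.inl rfl) hpQ
        exact stepQ p' p (fun h => hpp h.symm)
          (fun l0 a b c d => (hlines l0 a b c d).symm) hw1 hw2
          (fun h => hpP h.symm) hp'Q
      obtain ⟨hp1, hp2⟩ := hnot p (Or.inl rfl) hpQ
      obtain ⟨hp'1, hp'2⟩ := hnot p' (Or.inr rfl) hp'Q
      have stepG : ∀ z w : P, z ≠ w →
          (∀ l0 : L, (Pp ∈ l0 ∨ Rp ∈ l0) → l0 ≠ ePQ → l0 ≠ ePR → l0 ≠ eRQ →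
            (z ∈ l0 ↔ w ∈ l0)) →
          z ∉ ePQ → z ∉ ePR → z ∉ eRQ → Pp ≠ z → Rp ≠ z → False := by
        intro z w hzw hiff hz1 hz2 hz3 hPz hRz
        have ha1 : Pp ∈ (mkLine hPz : L) := (mkLine_ax hPz).1
        have ha2 : z ∈ (mkLine hPz : L) := (mkLine_ax hPz).2
        have hb1 : Rp ∈ (mkLine hRz : L) := (mkLine_ax hRz).1
        have hb2 : z ∈ (mkLine hRz : L) := (mkLine_ax hRz).2
        have hwm1 : w ∈ (mkLine hPz : L) :=
          (hiff _ (Or.inl ha1) (fun he => hz1 (he ▸ ha2))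
            (fun he => hz2 (he ▸ ha2)) (fun he => hPRQ (he ▸ ha1))).mp ha2
        have hwm2 : w ∈ (mkLine hRz : L) :=
          (hiff _ (Or.inr hb1) (fun he => hgen' (he ▸ hb1))
            (fun he => hz2 (he ▸ hb2)) (fun he => hz3 (he ▸ hb2))).mp hb2
        have hm12 : (mkLine hPz : L) ≠ (mkLine hRz : L) := by
          intro he
          have hR : Rp ∈ (mkLine hPz : L) := he ▸ hb1
          have he2 : (mkLine hPz : L) = ePR := aux_line_eq hPR ha1 hR hPePR hRePR
          exact hz2 (he2 ▸ ha2)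
        exact hzw (aux_pt_eq hm12 ha2 hb2 hwm1 hwm2)
      by_cases hpe : p ∈ eRQ
      · by_cases hp'e : p' ∈ eRQ
        · have hPp : Pp ≠ p := fun h => hpP h.symm
          have ha1 : Pp ∈ (mkLine hPp : L) := (mkLine_ax hPp).1
          have ha2 : p ∈ (mkLine hPp : L) := (mkLine_ax hPp).2
          have hwm1 : p' ∈ (mkLine hPp : L) :=
            (hlines _ (Or.inl ha1) (fun he => hp1 (he ▸ ha2))
              (fun he => hp2 (he ▸ ha2)) (fun he => hPRQ (he ▸ ha1))).mp ha2
          have hne : (mkLine hPp : L) ≠ eRQ := fun he => hPRQ (he ▸ ha1)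
          exact hpp (aux_pt_eq hne ha2 hpe hwm1 hp'e)
        · exact stepG p' p (fun h => hpp h.symm)
            (fun l0 a b c d => (hlines l0 a b c d).symm) hp'1 hp'2 hp'e
            (fun h => hp'P h.symm) (fun h => hp'R h.symm)
      · exact stepG p p' hpp hlines hp1 hp2 hpe
          (fun h => hpP h.symm) (fun h => hpR h.symm)
    · -- point / line
      exfalso
      have hdd := hd (.inl u0) hu0S
      by_cases hpu : p = u0
      · rw [hpu, SimpleGraph.dist_self] at hdd
        by_cases hm : u0 ∈ l'
        · rw [aux_dist_inr_inl_mem hm] at hdd; omega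
        · rw [aux_dist_inr_inl_not_mem hm] at hdd; omega
      · rw [aux_dist_inl_inl hpu] at hdd
        by_cases hm : u0 ∈ l'
        · rw [aux_dist_inr_inl_mem hm] at hdd; omega
        · rw [aux_dist_inr_inl_not_mem hm] at hdd; omega
    · -- line / point
      exfalso
      have hdd := hd (.inl u0) hu0S
      by_cases hpu : p' = u0
      · rw [hpu, SimpleGraph.dist_self] at hdd
        by_cases hm : u0 ∈ l
        · rw [aux_dist_inr_inl_mem hm] at hdd; omega
        · rw [aux_dist_inr_inl_not_mem hm] at hdd; omega
      · rw [aux_dist_inl_inl hpu] at hdd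
        by_cases hm : u0 ∈ l
        · rw [aux_dist_inr_inl_mem hm] at hdd; omega
        · rw [aux_dist_inr_inl_not_mem hm] at hdd; omega
    · -- line / line
      by_cases hll : l = l'
      · rw [hll]
      exfalso
      have hpts : ∀ z : P, (z ∈ ePQ ∨ z ∈ ePR) → z ≠ Pp → z ≠ Qp → z ≠ Rp →
          (z ∈ l ↔ z ∈ l') := by
        intro z h1 h2 h3 h4
        have hdd := hd (.inl z) (hSA z h1 h2 h3 h4)
        by_cases ha : z ∈ l <;> by_cases hb : z ∈ l'
        · exact iff_of_true ha hb
        · rw [aux_dist_inr_inl_mem ha, aux_dist_inr_inl_not_mem hb] at hdd; omega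
        · rw [aux_dist_inr_inl_not_mem ha, aux_dist_inr_inl_mem hb] at hdd; omega
        · exact iff_of_false ha hb
      have hmnot : ∀ m : L, (Pp ∈ m ∨ Rp ∈ m) → m ≠ ePQ → m ≠ ePR → m ≠ eRQ →
          m ≠ l ∧ m ≠ l' := by
        intro m h1 h2 h3 h4
        have hdd := hd (.inr m) (hSB m h1 h2 h3 h4)
        constructor <;> rintro rfl
        · rw [SimpleGraph.dist_self, aux_dist_inr_inr (fun h => hll h.symm)] at hdd
          omega
        · rw [SimpleGraph.dist_self, aux_dist_inr_inr hll] at hdd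
          omega
      have hshare : ∀ a b : P, a ≠ b → a ∈ l → a ∈ l' → b ∈ l → b ∈ l' → False :=
        fun a b hab h1 h2 h3 h4 => hll (aux_line_eq hab h1 h3 h2 h4)
      have classify : ∀ m : L, m = l ∨ m = l' →
          (∃ u v : P, u ≠ v ∧ u ∈ m ∧ v ∈ m ∧
            ((u ∈ ePQ ∨ u ∈ ePR) ∧ u ≠ Pp ∧ u ≠ Qp ∧ u ≠ Rp) ∧
            ((v ∈ ePQ ∨ v ∈ ePR) ∧ v ≠ Pp ∧ v ≠ Qp ∧ v ≠ Rp)) ∨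
          m = eRQ ∨
          (Qp ∈ m ∧ ∃ t : P, t ∈ m ∧ t ∈ ePR ∧ t ≠ Pp ∧ t ≠ Qp ∧ t ≠ Rp) := by
        intro m hm
        have hmem : (Pp ∈ m ∨ Rp ∈ m) → m = ePQ ∨ m = ePR ∨ m = eRQ := by
          intro h
          by_contra hc
          push_neg at hc
          obtain ⟨h2, h3, h4⟩ := hc
          rcases hm with rfl | rfl
          · exact (hmnot m h h2 h3 h4).1 rfl
          · exact (hmnot m h h2 h3 h4).2 rfl
        by_cases hPm : Pp ∈ m
        · rcases hmem (Or.inl hPm) with rfl | rfl | rfl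
          · left
            have hv0R : v0 ≠ Rp := fun h => hgen' (h ▸ hv0)
            exact ⟨u0, v0, huv0, hu0, hv0, ⟨Or.inl hu0, hu0P, hu0Q, hu0R⟩,
              ⟨Or.inl hv0, hv0P, hv0Q, hv0R⟩⟩
          · left
            obtain ⟨u, v, hu, hv, huv, huP, huR, hvP, hvR⟩ :=
              aux_exists_two hq ePR Pp Rp hPR hPePR hRePR
            have huQ : u ≠ Qp := fun h => hQPR (h ▸ hu)
            have hvQ : v ≠ Qp := fun h => hQPR (h ▸ hv)
            exact ⟨u, v, huv, hu, hv, ⟨Or.inr hu, huP, huQ, huR⟩,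
              ⟨Or.inr hv, hvP, hvQ, hvR⟩⟩
          · exact absurd hPm hPRQ
        · by_cases hRm : Rp ∈ m
          · rcases hmem (Or.inr hRm) with rfl | rfl | rfl
            · exact absurd hPePQ hPm
            · exact absurd hPePR hPm
            · right; left; rfl
          · by_cases hQm : Qp ∈ m
            · right; right
              have hmePR : m ≠ ePR := fun he => hPm (he ▸ hPePR)
              refine ⟨hQm, (HasPoints.mkPoint hmePR : P), (HasPoints.mkPoint_ax hmePR).1,
                (HasPoints.mkPoint_ax hmePR).2, ?_, ?_, ?_⟩
              · exact fun h => hPm (h ▸ (HasPoints.mkPoint_ax hmePR).1)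
              · exact fun h => hQPR (h ▸ (HasPoints.mkPoint_ax hmePR).2)
              · exact fun h => hRm (h ▸ (HasPoints.mkPoint_ax hmePR).1)
            · left
              have hm1 : m ≠ ePQ := fun he => hPm (he ▸ hPePQ)
              have hm2 : m ≠ ePR := fun he => hPm (he ▸ hPePR)
              have hs1m : (HasPoints.mkPoint hm1 : P) ∈ m := (HasPoints.mkPoint_ax hm1).1
              have hs1e : (HasPoints.mkPoint hm1 : P) ∈ ePQ := (HasPoints.mkPoint_ax hm1).2
              have hs2m : (HasPoints.mkPoint hm2 : P) ∈ m := (HasPoints.mkPoint_ax hm2).1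
              have hs2e : (HasPoints.mkPoint hm2 : P) ∈ ePR := (HasPoints.mkPoint_ax hm2).2
              have hs12 : (HasPoints.mkPoint hm1 : P) ≠ (HasPoints.mkPoint hm2 : P) := by
                intro he
                have h1 : (HasPoints.mkPoint hm1 : P) = Pp :=
                  aux_pt_eq hPQPR hs1e (he ▸ hs2e) hPePQ hPePR
                exact hPm (h1 ▸ hs1m)
              refine ⟨(HasPoints.mkPoint hm1 : P), (HasPoints.mkPoint hm2 : P), hs12, hs1m, hs2m,
                ⟨Or.inl hs1e, ?_, ?_, ?_⟩, ⟨Or.inr hs2e, ?_, ?_, ?_⟩⟩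
              · exact fun h => hPm (h ▸ hs1m)
              · exact fun h => hQm (h ▸ hs1m)
              · exact fun h => hRm (h ▸ hs1m)
              · exact fun h => hPm (h ▸ hs2m)
              · exact fun h => hQPR (h ▸ hs2e)
              · exact fun h => hRm (h ▸ hs2m)
      rcases classify l (Or.inl rfl) with
        ⟨u, v, huv, h1, h2, hu, hv⟩ | hle | ⟨hQl, t, ht, htPR, htP, htQ, htR⟩
      · exact hshare u v huv h1
          ((hpts u hu.1 hu.2.1 hu.2.2.1 hu.2.2.2).mp h1) h2
          ((hpts v hv.1 hv.2.1 hv.2.2.1 hv.2.2.2).mp h2)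
      · rcases classify l' (Or.inr rfl) with
          ⟨u, v, huv, h1, h2, hu, hv⟩ | hl'e | ⟨hQl', t, ht, htPR, htP, htQ, htR⟩
        · exact hshare u v huv
            ((hpts u hu.1 hu.2.1 hu.2.2.1 hu.2.2.2).mpr h1) h1
            ((hpts v hv.1 hv.2.1 hv.2.2.1 hv.2.2.2).mpr h2) h2
        · exact hll (hle.trans hl'e.symm)
        · have htl : t ∈ l := (hpts t (Or.inr htPR) htP htQ htR).mpr ht
          subst hle
          have : t = Rp := aux_pt_eq (fun h => hPReRQ h.symm) htl htPR hReRQ hRePR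
          exact htR this
      · rcases classify l' (Or.inr rfl) with
          ⟨u, v, huv, h1, h2, hu, hv⟩ | hl'e | ⟨hQl', t', ht', ht'PR, ht'P, ht'Q, ht'R⟩
        · exact hshare u v huv
            ((hpts u hu.1 hu.2.1 hu.2.2.1 hu.2.2.2).mpr h1) h1
            ((hpts v hv.1 hv.2.1 hv.2.2.1 hv.2.2.2).mpr h2) h2
        · have htl' : t ∈ l' := (hpts t (Or.inr htPR) htP htQ htR).mp ht
          subst hl'e
          have : t = Rp := aux_pt_eq (fun h => hPReRQ h.symm) htl' htPR hReRQ hRePR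
          exact htR this
        · have htl' : t ∈ l' := (hpts t (Or.inr htPR) htP htQ htR).mp ht
          exact hshare t Qp (fun h => hQPR (h ▸ htPR)) ht htl' hQl hQl'
  · -- cardinality
    have hAeq : {x : P | (x ∈ ePQ ∨ x ∈ ePR) ∧ x ≠ Pp ∧ x ≠ Qp ∧ x ≠ Rp} =
        ({x : P | x ∈ ePQ} \ {Pp, Qp}) ∪ ({x : P | x ∈ ePR} \ {Pp, Rp}) := by
      ext z
      simp only [Set.mem_setOf_eq, Set.mem_union, Set.mem_diff, Set.mem_insert_iff,
        Set.mem_singleton_iff, not_or]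
      constructor
      · rintro ⟨h1 | h1, h2, h3, h4⟩
        · exact Or.inl ⟨h1, h2, h3⟩
        · exact Or.inr ⟨h1, h2, h4⟩
      · rintro (⟨h1, h2, h3⟩ | ⟨h1, h2, h4⟩)
        · exact ⟨Or.inl h1, h2, h3, fun h => hgen' (h ▸ h1)⟩
        · exact ⟨Or.inr h1, h2, fun h => hQPR (h ▸ h1), h4⟩
    have hBeq : {m : L | (Pp ∈ m ∨ Rp ∈ m) ∧ m ≠ ePQ ∧ m ≠ ePR ∧ m ≠ eRQ} =
        ({m : L | Pp ∈ m} \ {ePQ, ePR}) ∪ ({m : L | Rp ∈ m} \ {ePR, eRQ}) := by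
      ext m
      simp only [Set.mem_setOf_eq, Set.mem_union, Set.mem_diff, Set.mem_insert_iff,
        Set.mem_singleton_iff, not_or]
      constructor
      · rintro ⟨h1 | h1, h2, h3, h4⟩
        · exact Or.inl ⟨h1, h2, h3⟩
        · exact Or.inr ⟨h1, h3, h4⟩
      · rintro (⟨h1, h2, h3⟩ | ⟨h1, h3, h4⟩)
        · exact ⟨Or.inl h1, h2, h3, fun h => hPRQ (h ▸ h1)⟩
        · exact ⟨Or.inr h1, fun h => hgen' (h ▸ h1), h3, h4⟩
    have hdisj0 : Disjoint
        (Sum.inl '' {x : P | (x ∈ ePQ ∨ x ∈ ePR) ∧ x ≠ Pp ∧ x ≠ Qp ∧ x ≠ Rp})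
        (Sum.inr '' {m : L | (Pp ∈ m ∨ Rp ∈ m) ∧ m ≠ ePQ ∧ m ≠ ePR ∧ m ≠ eRQ}) := by
      rw [Set.disjoint_left]
      rintro _ ⟨a, _, rfl⟩ ⟨b, _, hb⟩
      cases hb
    have hdisjA : Disjoint ({x : P | x ∈ ePQ} \ {Pp, Qp})
        ({x : P | x ∈ ePR} \ {Pp, Rp}) := by
      rw [Set.disjoint_left]
      rintro z hz hz'
      have hzP : z = Pp := aux_pt_eq hPQPR hz.1 hz'.1 hPePQ hPePR
      exact hz.2 (Set.mem_insert_iff.mpr (Or.inl hzP))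
    have hdisjB : Disjoint ({m : L | Pp ∈ m} \ {ePQ, ePR})
        ({m : L | Rp ∈ m} \ {ePR, eRQ}) := by
      rw [Set.disjoint_left]
      rintro m hm hm'
      have hmP : m = ePR := aux_line_eq hPR hm.1 hm'.1 hPePR hRePR
      exact hm.2 (Set.mem_insert_iff.mpr (Or.inr (Set.mem_singleton_iff.mpr hmP)))
    have hsub1 : ({Pp, Qp} : Set P) ⊆ {x : P | x ∈ ePQ} := by
      rintro z (rfl | rfl) <;> assumption
    have hsub2 : ({Pp, Rp} : Set P) ⊆ {x : P | x ∈ ePR} := by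
      rintro z (rfl | rfl) <;> assumption
    have hsub3 : ({ePQ, ePR} : Set L) ⊆ {m : L | Pp ∈ m} := by
      rintro m (rfl | rfl) <;> assumption
    have hsub4 : ({ePR, eRQ} : Set L) ⊆ {m : L | Rp ∈ m} := by
      rintro m (rfl | rfl) <;> assumption
    rw [hSeq, Set.ncard_union_eq hdisj0,
      Set.ncard_image_of_injective _ Sum.inl_injective,
      Set.ncard_image_of_injective _ Sum.inr_injective, hAeq, hBeq,
      Set.ncard_union_eq hdisjA, Set.ncard_union_eq hdisjB,
      Set.ncard_diff hsub1, Set.ncard_diff hsub2, Set.ncard_diff hsub3,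
      Set.ncard_diff hsub4, aux_card_line_points, aux_card_line_points,
      aux_card_point_lines, aux_card_point_lines, Set.ncard_pair hPQ,
      Set.ncard_pair hPR, Set.ncard_pair hPQPR, Set.ncard_pair hPReRQ]
    omega
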